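/- Fix σ > 0 and a point y feasible for the barrier problem (Q − 𝒜ᵀy positive definite, y_{ij} ≤ 0 for all i, j), and fix a coordinate ij. Let φ(s) = f(y + s·e_{ij}; σ). (i) Suppose ∂f/∂y_{ij}(y; σ) > 0 and y_{ij} < 0. If there exists s ≥ 0 with φ'(s) = 0, then for the smallest s⁺ ≥ 0 with φ'(s⁺) = 0 one of the following holds: (a) y + s⁺ e_{ij} is feasible for the barrier problem; or (b) s⁺ > −y_{ij}, the point y − y_{ij} e_{ij} is feasible for the barrier problem, and φ'(−y_{ij}) > 0. (ii) Suppose ∂f/∂y_{ij}(y; σ) < 0. If there exists s ≤ 0 with φ'(s) = 0, then for the largest s⁻ ≤ 0 with φ'(s⁻) = 0, the point y + s⁻ e_{ij} is feasible for the barrier problem. -/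

import Mathlib

noncomputable def A0mat (n : ℕ) : Matrix (Fin (n + 1)) (Fin (n + 1)) ℝ :=
  fun k m => if k = 0 ∧ m = 0 then 1 else 0

noncomputable def Aconstr (n : ℕ) (l u : Fin n → ℤ) (β : Fin n → ℤ → ℝ)
    (i : Fin n) (j : ℤ) : Matrix (Fin (n + 1)) (Fin (n + 1)) ℝ :=
  fun k m =>
    if k = 0 then
      if m = 0 then
        (if j = u i then β i j + (l i : ℝ) * (u i : ℝ)
         else β i j - (j : ℝ) * ((j : ℝ) + 1))
      else if m = i.succ then
        (if j = u i then -((l i : ℝ) + (u i : ℝ)) / 2 else (j : ℝ) + 1 / 2)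
      else 0
    else if k = i.succ then
      if m = 0 then
        (if j = u i then -((l i : ℝ) + (u i : ℝ)) / 2 else (j : ℝ) + 1 / 2)
      else if m = i.succ then (if j = u i then (1 : ℝ) else -1)
      else 0
    else 0

noncomputable def ATy (n : ℕ) (l u : Fin n → ℤ) (β : Fin n → ℤ → ℝ)
    (y0 : ℝ) (yv : Fin n → ℤ → ℝ) : Matrix (Fin (n + 1)) (Fin (n + 1)) ℝ :=
  y0 • A0mat n + ∑ i : Fin n, ∑ j ∈ Finset.Icc (l i) (u i), yv i j • Aconstr n l u β i j

noncomputable def bdot (n : ℕ) (l u : Fin n → ℤ) (β : Fin n → ℤ → ℝ)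
    (y0 : ℝ) (yv : Fin n → ℤ → ℝ) : ℝ :=
  y0 + ∑ i : Fin n, ∑ j ∈ Finset.Icc (l i) (u i), β i j * yv i j

noncomputable def lsGrad (n : ℕ) (l u : Fin n → ℤ) (β : Fin n → ℤ → ℝ)
    (Q : Matrix (Fin (n + 1)) (Fin (n + 1)) ℝ) (σ y0 : ℝ) (yv : Fin n → ℤ → ℝ)
    (i : Fin n) (j : ℤ) (s : ℝ) : ℝ :=
  β i j - σ * (Aconstr n l u β i j *
      (Q - ATy n l u β y0 yv - s • Aconstr n l u β i j)⁻¹).trace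

section Helpers

variable {N : ℕ}

lemma posDef_smul_real {M : Matrix (Fin N) (Fin N) ℝ} (h : M.PosDef) {c : ℝ} (hc : 0 < c) :
    (c • M).PosDef := by
  refine ⟨?_, fun x hx => ?_⟩
  · rw [Matrix.IsHermitian, Matrix.conjTranspose_smul, star_trivial, h.1]
  · have h2 := mul_pos hc (h.2 hx)
    simp only [Matrix.smul_apply, smul_eq_mul, star_trivial, Finsupp.sum, Finset.mul_sum] at h2 ⊢
    convert h2 using 1
    exact Finset.sum_congr rfl fun _ _ => Finset.sum_congr rfl fun _ _ => by ring

lemma posDef_segment {P A : Matrix (Fin N) (Fin N) ℝ} {a b c : ℝ}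
    (ha : (P - a • A).PosDef) (hb : (P - b • A).PosDef) (hac : a ≤ c) (hcb : c ≤ b) :
    (P - c • A).PosDef := by
  rcases eq_or_lt_of_le hac with rfl | hac'
  · exact ha
  rcases eq_or_lt_of_le hcb with rfl | hcb'
  · exact hb
  set t : ℝ := (c - a) / (b - a) with ht
  have hab : a < b := lt_trans hac' hcb'
  have ht0 : 0 < t := div_pos (by linarith) (by linarith)
  have ht1 : t < 1 := by
    rw [div_lt_one (by linarith)]; linarith
  have hc : c = (1 - t) * a + t * b := by
    rw [ht]
    have hne : b - a ≠ 0 := sub_ne_zero.mpr hab.ne'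
    field_simp
    ring
  have key : P - c • A = (1 - t) • (P - a • A) + t • (P - b • A) := by
    ext k m
    simp only [Matrix.sub_apply, Matrix.smul_apply, Matrix.add_apply, smul_eq_mul, hc]
    ring
  rw [key]
  exact (posDef_smul_real ha (by linarith)).add (posDef_smul_real hb ht0)

lemma continuousAt_inv_pt {P A : Matrix (Fin N) (Fin N) ℝ} {s : ℝ}
    (h : (P - s • A).PosDef) :
    ContinuousAt (fun r : ℝ => (P - r • A)⁻¹) s := by
  have hM : Continuous fun r : ℝ => P - r • A :=
    continuous_const.sub (continuous_id.smul continuous_const)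
  have hdet : (P - s • A).det ≠ 0 := ne_of_gt h.det_pos
  have hinv : ContinuousAt Inv.inv (P - s • A) := by
    apply continuousAt_matrix_inv
    rw [Ring.inverse_eq_inv']
    exact continuousAt_inv₀ hdet
  show ContinuousAt (Inv.inv ∘ fun r : ℝ => P - r • A) s
  exact ContinuousAt.comp (f := fun r : ℝ => P - r • A) hinv hM.continuousAt

lemma continuousOn_lsGrad (n : ℕ) (l u : Fin n → ℤ) (β : Fin n → ℤ → ℝ)
    (Q : Matrix (Fin (n + 1)) (Fin (n + 1)) ℝ) (σ y0 : ℝ) (yv : Fin n → ℤ → ℝ)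
    (i : Fin n) (j : ℤ) {a b : ℝ}
    (h : ∀ s ∈ Set.Icc a b,
      (Q - ATy n l u β y0 yv - s • Aconstr n l u β i j).PosDef) :
    ContinuousOn (lsGrad n l u β Q σ y0 yv i j) (Set.Icc a b) := by
  intro s hs
  apply ContinuousAt.continuousWithinAt
  have h1 : ContinuousAt
      (fun r : ℝ => (Q - ATy n l u β y0 yv - r • Aconstr n l u β i j)⁻¹) s :=
    continuousAt_inv_pt (h s hs)
  have h2 : Continuous fun X : Matrix (Fin (n + 1)) (Fin (n + 1)) ℝ =>
      (Aconstr n l u β i j * X).trace :=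
    (continuous_const.matrix_mul continuous_id).matrix_trace
  have h3 : ContinuousAt (fun r : ℝ => (Aconstr n l u β i j *
      (Q - ATy n l u β y0 yv - r • Aconstr n l u β i j)⁻¹).trace) s :=
    ContinuousAt.comp (f := fun r : ℝ =>
      (Q - ATy n l u β y0 yv - r • Aconstr n l u β i j)⁻¹) h2.continuousAt h1
  exact continuousAt_const.sub (continuousAt_const.mul h3)

end Helpers

theorem stmt9 (n : ℕ) (hn : 1 ≤ n) (l u : Fin n → ℤ) (hlu : ∀ i, l i < u i)
    (β : Fin n → ℤ → ℝ) (Q : Matrix (Fin (n + 1)) (Fin (n + 1)) ℝ)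
    (hQ : Q.IsHermitian) (σ : ℝ) (hσ : 0 < σ) (y0 : ℝ) (yv : Fin n → ℤ → ℝ)
    (hfeas : (Q - ATy n l u β y0 yv).PosDef)
    (hsign : ∀ i : Fin n, ∀ j ∈ Finset.Icc (l i) (u i), yv i j ≤ 0)
    (i : Fin n) (j : ℤ) (hj : j ∈ Finset.Icc (l i) (u i)) :
    ((0 < lsGrad n l u β Q σ y0 yv i j 0 → yv i j < 0 →
      (∃ s : ℝ, 0 ≤ s ∧
          (Q - ATy n l u β y0 yv - s • Aconstr n l u β i j).PosDef ∧
          lsGrad n l u β Q σ y0 yv i j s = 0) →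
      ∃ sp : ℝ,
        IsLeast {s : ℝ | 0 ≤ s ∧
            (Q - ATy n l u β y0 yv - s • Aconstr n l u β i j).PosDef ∧
            lsGrad n l u β Q σ y0 yv i j s = 0} sp ∧
        (((Q - ATy n l u β y0 yv - sp • Aconstr n l u β i j).PosDef ∧
            yv i j + sp ≤ 0) ∨
          (-yv i j < sp ∧
            (Q - ATy n l u β y0 yv + yv i j • Aconstr n l u β i j).PosDef ∧
            0 < lsGrad n l u β Q σ y0 yv i j (-yv i j))))) ∧
    (lsGrad n l u β Q σ y0 yv i j 0 < 0 →
      (∃ s : ℝ, s ≤ 0 ∧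
          (Q - ATy n l u β y0 yv - s • Aconstr n l u β i j).PosDef ∧
          lsGrad n l u β Q σ y0 yv i j s = 0) →
      ∃ sm : ℝ,
        IsGreatest {s : ℝ | s ≤ 0 ∧
            (Q - ATy n l u β y0 yv - s • Aconstr n l u β i j).PosDef ∧
            lsGrad n l u β Q σ y0 yv i j s = 0} sm ∧
        (Q - ATy n l u β y0 yv - sm • Aconstr n l u β i j).PosDef ∧
        yv i j + sm ≤ 0) := by
  have hfeas0 : (Q - ATy n l u β y0 yv - (0 : ℝ) • Aconstr n l u β i j).PosDef := by
    simpa using hfeas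
  have hy0 : yv i j ≤ 0 := hsign i j hj
  constructor
  · rintro hpos hylt ⟨s₀, hs₀0, hs₀pd, hs₀z⟩
    have hseg : ∀ s ∈ Set.Icc (0 : ℝ) s₀,
        (Q - ATy n l u β y0 yv - s • Aconstr n l u β i j).PosDef :=
      fun s hs => posDef_segment hfeas0 hs₀pd hs.1 hs.2
    have hg := continuousOn_lsGrad n l u β Q σ y0 yv i j hseg
    set K : Set ℝ := Set.Icc 0 s₀ ∩ (lsGrad n l u β Q σ y0 yv i j) ⁻¹' {0} with hK
    have hKcl : IsClosed K :=
      hg.preimage_isClosed_of_isClosed isClosed_Icc isClosed_singleton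
    have hKc : IsCompact K :=
      isCompact_Icc.of_isClosed_subset hKcl Set.inter_subset_left
    have hKne : K.Nonempty := ⟨s₀, ⟨hs₀0, le_rfl⟩, by simpa using hs₀z⟩
    obtain ⟨sp, hspK, hlb⟩ := hKc.exists_isLeast hKne
    have hspz : lsGrad n l u β Q σ y0 yv i j sp = 0 := by
      have := hspK.2; simpa using this
    have hsppd := hseg sp hspK.1
    refine ⟨sp, ⟨⟨hspK.1.1, hsppd, hspz⟩, ?_⟩, ?_⟩
    · intro t ht
      by_cases hts : t ≤ s₀
      · exact hlb ⟨⟨ht.1, hts⟩, by simpa using ht.2.2⟩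
      · push_neg at hts
        linarith [hspK.1.2]
    · by_cases hc : yv i j + sp ≤ 0
      · exact Or.inl ⟨hsppd, hc⟩
      · push_neg at hc
        have hms : -yv i j < sp := by linarith
        have hmem : -yv i j ∈ Set.Icc (0 : ℝ) s₀ := ⟨by linarith, by linarith [hspK.1.2]⟩
        refine Or.inr ⟨hms, ?_, ?_⟩
        · have hpd := hseg _ hmem
          rwa [neg_smul, sub_neg_eq_add] at hpd
        · by_contra hle
          push_neg at hle
          have hsub : Set.Icc (0 : ℝ) (-yv i j) ⊆ Set.Icc 0 s₀ :=
            Set.Icc_subset_Icc le_rfl hmem.2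
          have hIVT := intermediate_value_Icc' (by linarith : (0 : ℝ) ≤ -yv i j)
            (hg.mono hsub)
          have h0mem : (0 : ℝ) ∈ Set.Icc (lsGrad n l u β Q σ y0 yv i j (-yv i j))
              (lsGrad n l u β Q σ y0 yv i j 0) := ⟨hle, le_of_lt hpos⟩
          obtain ⟨x, hx, hgx⟩ := hIVT h0mem
          have hxK : x ∈ K := ⟨hsub hx, by simpa using hgx⟩
          have := hlb hxK
          linarith [hx.2]
  · rintro hneg ⟨s₀, hs₀0, hs₀pd, hs₀z⟩
    have hseg : ∀ s ∈ Set.Icc s₀ (0 : ℝ),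
        (Q - ATy n l u β y0 yv - s • Aconstr n l u β i j).PosDef :=
      fun s hs => posDef_segment hs₀pd hfeas0 hs.1 hs.2
    have hg := continuousOn_lsGrad n l u β Q σ y0 yv i j hseg
    set K : Set ℝ := Set.Icc s₀ 0 ∩ (lsGrad n l u β Q σ y0 yv i j) ⁻¹' {0} with hK
    have hKcl : IsClosed K :=
      hg.preimage_isClosed_of_isClosed isClosed_Icc isClosed_singleton
    have hKc : IsCompact K :=
      isCompact_Icc.of_isClosed_subset hKcl Set.inter_subset_left
    have hKne : K.Nonempty := ⟨s₀, ⟨le_rfl, hs₀0⟩, by simpa using hs₀z⟩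
    obtain ⟨sm, hsmK, hub⟩ := hKc.exists_isGreatest hKne
    have hsmz : lsGrad n l u β Q σ y0 yv i j sm = 0 := by
      have := hsmK.2; simpa using this
    have hsmpd := hseg sm hsmK.1
    refine ⟨sm, ⟨⟨hsmK.1.2, hsmpd, hsmz⟩, ?_⟩, hsmpd, by linarith [hsmK.1.2]⟩
    intro t ht
    by_cases hts : s₀ ≤ t
    · exact hub ⟨⟨hts, ht.1⟩, by simpa using ht.2.2⟩
    · push_neg at hts
      linarith [hsmK.1.1]
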